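/- For every t ∈ (0,1) and every a ≥ 0: ∫_t^1 (1/√((1−s)(s−t))) · exp(−a/(s−t)) ds = √π · ∫_{a/(1−t)}^{∞} e^{−u} · u^{−1/2} du. -/

import Mathlib

open MeasureTheory Real

section aux_integral_identity_timechange

open Set

private lemma aux_expint (b : ℝ) {c : ℝ} (hc : 0 < c) :
    ∫ u in Ioi b, Real.exp (-(c * u)) = Real.exp (-(c * b)) / c := by
  have := integral_comp_mul_left_Ioi (fun x => Real.exp (-x)) b hc
  simp only [smul_eq_mul] at this
  rw [this, integral_exp_neg_Ioi]; ring

private lemma aux_expint' (b : ℝ) {y : ℝ} :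
    ∫ u in Ioi b, Real.exp (-(u * (1 + y ^ 2))) =
      Real.exp (-(b * (1 + y ^ 2))) / (1 + y ^ 2) := by
  have hc : (0:ℝ) < 1 + y ^ 2 := by positivity
  have h := aux_expint b hc
  rw [show (fun u : ℝ => Real.exp (-(u * (1 + y ^ 2)))) =
      (fun u : ℝ => Real.exp (-((1 + y ^ 2) * u))) by funext u; ring_nf, h]
  ring_nf

private lemma aux_gaussint (u : ℝ) :
    ∫ y in Ioi (0:ℝ), Real.exp (-(u * (1 + y ^ 2))) = Real.exp (-u) * (Real.sqrt (π / u) / 2) := by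
  have : ∀ y : ℝ, Real.exp (-(u * (1 + y ^ 2))) = Real.exp (-u) * Real.exp (-u * y ^ 2) := by
    intro y; rw [← Real.exp_add]; ring_nf
  simp only [this]
  rw [integral_const_mul, integral_gaussian_Ioi]

private lemma aux_fubini_step {b : ℝ} (hb : 0 ≤ b) :
    ∫ y in Ioi (0:ℝ), 2 * Real.exp (-(b * (1 + y ^ 2))) / (1 + y ^ 2) =
      Real.sqrt π * ∫ u in Ioi b, Real.exp (-u) / Real.sqrt u := by
  have hc : ∀ y : ℝ, (0:ℝ) < 1 + y ^ 2 := fun y => by positivity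
  have hmeas : AEStronglyMeasurable (fun p : ℝ × ℝ => Real.exp (-(p.2 * (1 + p.1 ^ 2))))
      ((volume.restrict (Ioi (0:ℝ))).prod (volume.restrict (Ioi b))) := by
    apply Continuous.aestronglyMeasurable; continuity
  have h1 : ∀ y : ℝ, Integrable (fun u : ℝ => Real.exp (-(u * (1 + y ^ 2))))
      (volume.restrict (Ioi b)) := fun y =>
    (exp_neg_integrableOn_Ioi b (hc y)).congr_fun (fun u _ => by ring_nf) measurableSet_Ioi
  have h2 : Integrable (fun y : ℝ => ∫ u in Ioi b, ‖Real.exp (-(u * (1 + y ^ 2)))‖)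
      (volume.restrict (Ioi (0:ℝ))) := by
    have heqn : (fun y : ℝ => ∫ u in Ioi b, ‖Real.exp (-(u * (1 + y ^ 2)))‖) =
        (fun y : ℝ => Real.exp (-(b * (1 + y ^ 2))) / (1 + y ^ 2)) := by
      funext y
      simp only [Real.norm_eq_abs, abs_of_pos (Real.exp_pos _)]
      exact aux_expint' b
    rw [heqn]
    refine (integrable_inv_one_add_sq.restrict (s := Ioi 0)).mono' ?_ ?_
    · exact ((Real.continuous_exp.comp (by continuity)).div (by continuity)
        (fun y => (hc y).ne')).aestronglyMeasurable
    · refine Filter.Eventually.of_forall (fun y => ?_)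
      rw [Real.norm_eq_abs, abs_of_nonneg (by positivity), ← one_div]
      have h1e : Real.exp (-(b * (1 + y ^ 2))) ≤ 1 := by
        rw [← Real.exp_zero]
        apply Real.exp_le_exp.2; simp only [neg_nonpos, Real.exp_zero]; positivity
      gcongr
  have hint : Integrable (fun p : ℝ × ℝ => Real.exp (-(p.2 * (1 + p.1 ^ 2))))
      ((volume.restrict (Ioi (0:ℝ))).prod (volume.restrict (Ioi b))) := by
    rw [integrable_prod_iff hmeas]
    exact ⟨Filter.Eventually.of_forall h1, h2⟩
  have hswap := integral_integral_swap (f := fun y u : ℝ =>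
      Real.exp (-(u * (1 + y ^ 2)))) hint
  have lhs_eq : (∫ y in Ioi (0:ℝ), ∫ u in Ioi b, Real.exp (-(u * (1 + y ^ 2)))) =
      ∫ y in Ioi (0:ℝ), Real.exp (-(b * (1 + y ^ 2))) / (1 + y ^ 2) := by
    refine integral_congr_ae (Filter.Eventually.of_forall fun y => ?_)
    exact aux_expint' b
  have rhs_eq : (∫ u in Ioi b, ∫ y in Ioi (0:ℝ), Real.exp (-(u * (1 + y ^ 2)))) =
      ∫ u in Ioi b, Real.sqrt π * (Real.exp (-u) / Real.sqrt u) / 2 := by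
    refine setIntegral_congr_fun measurableSet_Ioi (fun u hu => ?_)
    have hu0 : 0 < u := lt_of_le_of_lt hb hu
    rw [aux_gaussint u, Real.sqrt_div pi_pos.le]
    ring
  rw [lhs_eq, rhs_eq] at hswap
  have l2 : (∫ y in Ioi (0:ℝ), 2 * Real.exp (-(b * (1 + y ^ 2))) / (1 + y ^ 2)) =
      2 * ∫ y in Ioi (0:ℝ), Real.exp (-(b * (1 + y ^ 2))) / (1 + y ^ 2) := by
    rw [← integral_const_mul]
    congr 1; funext y; ring
  have r2 : (∫ u in Ioi b, Real.sqrt π * (Real.exp (-u) / Real.sqrt u) / 2) =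
      (Real.sqrt π / 2) * ∫ u in Ioi b, Real.exp (-u) / Real.sqrt u := by
    rw [← integral_const_mul]
    congr 1; funext u; ring
  rw [l2, hswap, r2]; ring

private lemma aux_image_inv_one_add_sq :
    (fun y : ℝ => (1 + y ^ 2)⁻¹) '' Ioi 0 = Ioo (0:ℝ) 1 := by
  ext x
  simp only [mem_image, mem_Ioi, mem_Ioo]
  constructor
  · rintro ⟨y, hy, rfl⟩
    have h1 : (0:ℝ) < 1 + y ^ 2 := by positivity
    refine ⟨inv_pos.2 h1, ?_⟩
    rw [inv_lt_one_iff₀]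
    right; nlinarith
  · rintro ⟨hx0, hx1⟩
    have hq : (0:ℝ) < (1 - x) / x := div_pos (by linarith) hx0
    refine ⟨Real.sqrt ((1 - x) / x), Real.sqrt_pos.2 hq, ?_⟩
    rw [Real.sq_sqrt hq.le]
    have hxne : x ≠ 0 := hx0.ne'
    field_simp
    ring

private lemma aux_subst_two (b : ℝ) :
    ∫ v in Ioo (0:ℝ) 1, 1 / Real.sqrt ((1 - v) * v) * Real.exp (-b / v) =
      ∫ y in Ioi (0:ℝ), 2 * Real.exp (-(b * (1 + y ^ 2))) / (1 + y ^ 2) := by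
  have hderiv : ∀ y ∈ Ioi (0:ℝ), HasDerivWithinAt (fun y : ℝ => (1 + y ^ 2)⁻¹)
      (-(2 * y) / (1 + y ^ 2) ^ 2) (Ioi 0) y := by
    intro y _
    have h : HasDerivAt (fun y : ℝ => 1 + y ^ 2) (2 * y) y := by
      simpa using (hasDerivAt_pow 2 y).const_add 1
    exact (h.inv (by positivity)).hasDerivWithinAt
  have hinj : InjOn (fun y : ℝ => (1 + y ^ 2)⁻¹) (Ioi 0) := by
    have : StrictAntiOn (fun y : ℝ => (1 + y ^ 2)⁻¹) (Ioi 0) := by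
      intro x hx y hy hxy
      simp only
      apply inv_strictAnti₀ (by positivity)
      simp only [mem_Ioi] at hx hy
      nlinarith
    exact this.injOn
  have himg := integral_image_eq_integral_abs_deriv_smul measurableSet_Ioi hderiv hinj
    (fun v => 1 / Real.sqrt ((1 - v) * v) * Real.exp (-b / v))
  rw [aux_image_inv_one_add_sq] at himg
  rw [himg]
  refine setIntegral_congr_fun measurableSet_Ioi (fun y hy => ?_)
  have hy0 : 0 < y := hy
  have h1 : (0:ℝ) < 1 + y ^ 2 := by positivity
  have hsq : Real.sqrt ((1 - (1 + y ^ 2)⁻¹) * (1 + y ^ 2)⁻¹) = y / (1 + y ^ 2) := by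
    rw [show (1 - (1 + y ^ 2)⁻¹) * (1 + y ^ 2)⁻¹ = (y / (1 + y ^ 2)) ^ 2 by
      field_simp; ring]
    exact Real.sqrt_sq (by positivity)
  simp only [smul_eq_mul, hsq]
  rw [show -b / (1 + y ^ 2)⁻¹ = -(b * (1 + y ^ 2)) by field_simp]
  rw [abs_div, abs_neg, abs_of_nonneg (by positivity : (0:ℝ) ≤ 2 * y),
    abs_of_nonneg (by positivity : (0:ℝ) ≤ (1 + y ^ 2) ^ 2)]
  field_simp

private lemma aux_subst_one (t a : ℝ) (ht : t ∈ Ioo (0:ℝ) 1) :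
    ∫ s in Ioo t 1, 1 / Real.sqrt ((1 - s) * (s - t)) * Real.exp (-a / (s - t)) =
      ∫ v in Ioo (0:ℝ) 1, 1 / Real.sqrt ((1 - v) * v) * Real.exp (-(a / (1 - t)) / v) := by
  have h1t : (0:ℝ) < 1 - t := by linarith [ht.2]
  have himage : (fun v : ℝ => (1 - t) * v + t) '' Ioo 0 1 = Ioo t 1 := by
    rw [image_affine_Ioo h1t]
    norm_num
  have hderiv : ∀ v ∈ Ioo (0:ℝ) 1, HasDerivWithinAt (fun v : ℝ => (1 - t) * v + t)
      (1 - t) (Ioo 0 1) v := by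
    intro v _
    simpa using (((hasDerivAt_id v).const_mul (1 - t)).add_const t).hasDerivWithinAt
  have hinj : InjOn (fun v : ℝ => (1 - t) * v + t) (Ioo 0 1) := by
    intro x _ y _ h
    simp only [add_left_inj] at h
    exact mul_left_cancel₀ h1t.ne' h
  have himg := integral_image_eq_integral_abs_deriv_smul measurableSet_Ioo hderiv hinj
    (fun s => 1 / Real.sqrt ((1 - s) * (s - t)) * Real.exp (-a / (s - t)))
  rw [himage] at himg
  rw [himg]
  refine setIntegral_congr_fun measurableSet_Ioo (fun v hv => ?_)
  obtain ⟨hv0, hv1⟩ := hv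
  have hsv : 0 < (1 - v) * v := by nlinarith
  have hsq : Real.sqrt ((1 - ((1 - t) * v + t)) * ((1 - t) * v + t - t)) =
      (1 - t) * Real.sqrt ((1 - v) * v) := by
    rw [show (1 - ((1 - t) * v + t)) * ((1 - t) * v + t - t) =
        (1 - t) ^ 2 * ((1 - v) * v) by ring,
      Real.sqrt_mul (sq_nonneg _), Real.sqrt_sq h1t.le]
  have hexp : -a / ((1 - t) * v + t - t) = -(a / (1 - t)) / v := by
    rw [show (1 - t) * v + t - t = (1 - t) * v by ring]
    field_simp
  simp only [smul_eq_mul, hsq, hexp, abs_of_pos h1t]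
  have hs0 : Real.sqrt ((1 - v) * v) ≠ 0 := (Real.sqrt_pos.2 hsv).ne'
  field_simp

end aux_integral_identity_timechange

/-- for `t ∈ (0,1)` and `a ≥ 0`,
`∫_t^1 exp(−a/(s−t)) / √((1−s)(s−t)) ds = √π ∫_{a/(1−t)}^∞ e^{−u} u^{−1/2} du`. -/
theorem integral_identity_timechange (t : ℝ) (ht : t ∈ Set.Ioo (0 : ℝ) 1)
    (a : ℝ) (ha : 0 ≤ a) :
    ∫ s in Set.Ioo t 1,
        1 / Real.sqrt ((1 - s) * (s - t)) * Real.exp (-a / (s - t)) =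
      Real.sqrt π * ∫ u in Set.Ioi (a / (1 - t)), Real.exp (-u) / Real.sqrt u := by
  have h1t : (0:ℝ) < 1 - t := by linarith [ht.2]
  have hb : 0 ≤ a / (1 - t) := div_nonneg ha h1t.le
  rw [aux_subst_one t a ht, aux_subst_two (a / (1 - t)), aux_fubini_step hb]
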